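/- Let $g : \mathbb{Z} \to \mathbb{R}$ and suppose $u = g \circ \phi$ is $p$-harmonic ($\Delta_p u(x) = 0$ for all $x \in G_k$). Then there exists a constant $C \in \mathbb{R}$ such that for every $n \in \mathbb{Z}$, $|g(n+1) - g(n)|^{p-2}\,(g(n+1) - g(n)) = C \cdot \varrho_n^{\,p-1}$. -/

import Mathlib

open scoped BigOperators

noncomputable section

/-- The group representation `G_k` of the Cayley tree of order `k`:
the free product of `k+1` copies of the cyclic group of order two. -/
abbrev G (k : ℕ) : Type := Monoid.CoprodI (fun _ : Fin (k + 1) => Multiplicative (ZMod 2))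

/-- The generators `a_0, ..., a_k` of `G_k`. -/
def gen (k : ℕ) (s : Fin (k + 1)) : G k :=
  Monoid.CoprodI.of (i := s) (Multiplicative.ofAdd (1 : ZMod 2))

/-- `φ_p(t) = |t|^(p-2) t` (real powers). -/
noncomputable def phiP (p t : ℝ) : ℝ := |t| ^ (p - 2) * t

/-- The discrete `p`-Laplacian on the Cayley tree with resistances `r`:
`Δ_p u (x) = ∑_{s=0}^{k} φ_p ((u (x a_s) - u x) / r (x, x a_s))`. -/
noncomputable def pLap (k : ℕ) (p : ℝ) (r : G k × G k → ℝ) (u : G k → ℝ) (x : G k) : ℝ :=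
  ∑ s : Fin (k + 1), phiP p ((u (x * gen k s) - u x) / r (x, x * gen k s))

/-- A function `u : G_k → ℝ` is `H`-periodic if `u (y x) = u x` for all `y ∈ H`, `x ∈ G_k`. -/
def IsPeriodic (k : ℕ) (H : Subgroup (G k)) (u : G k → ℝ) : Prop :=
  ∀ y ∈ H, ∀ x : G k, u (y * x) = u x

/-- The coset index `φ(x) = ρ(x)(0)` associated to a permutation action `ρ` of `G_k` on `ℤ`. -/
def cosetIdx {k : ℕ} (ρ : G k →* Equiv.Perm ℤ) (x : G k) : ℤ := ρ x 0

lemma phiP_zero (p : ℝ) : phiP p 0 = 0 := by simp [phiP]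

lemma phiP_neg (p t : ℝ) : phiP p (-t) = -phiP p t := by
  simp only [phiP, abs_neg]; ring

theorem stmt10 (k : ℕ) (hk : 1 ≤ k) (p : ℝ) (hp1 : 1 < p)
    (r : G k × G k → ℝ) (hr_symm : ∀ x y : G k, r (x, y) = r (y, x)) (hr_pos : ∀ x y : G k, 0 < r (x, y))
    (i j : Fin (k + 1)) (hij : i ≠ j)
    (ρ : G k →* Equiv.Perm ℤ)
    (hρi : ∀ n : ℤ, ρ (gen k i) n = 1 - n)
    (hρj : ∀ n : ℤ, ρ (gen k j) n = -1 - n)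
    (hρs : ∀ s : Fin (k + 1), s ≠ i → s ≠ j → ρ (gen k s) = 1)
    (ϱ : ℤ → ℝ) (hϱ_pos : ∀ n : ℤ, 0 < ϱ n)
    (hrϱ : ∀ x y : G k, cosetIdx ρ y = cosetIdx ρ x + 1 → r (x, y) = ϱ (cosetIdx ρ x))
    (g : ℤ → ℝ) (hharm : ∀ x : G k, pLap k p r (fun x => g (cosetIdx ρ x)) x = 0) :
    ∃ C : ℝ, ∀ n : ℤ,
      |g (n + 1) - g n| ^ (p - 2) * (g (n + 1) - g n) = C * ϱ n ^ (p - 1) := by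
  classical
  -- every ρ x is affine: translation or reflection
  have Aff : ∀ x : G k, (∀ m : ℤ, ρ x m = ρ x 0 + m) ∨ (∀ m : ℤ, ρ x m = ρ x 0 - m) := by
    intro x
    induction x using Monoid.CoprodI.induction_on with
    | one => left; intro m; simp
    | of s m =>
      rcases (by decide : ∀ m : Multiplicative (ZMod 2),
          m = 1 ∨ m = Multiplicative.ofAdd 1) m with hm | hm
      · subst hm; left; intro m'
        rw [map_one, map_one]; simp
      · subst hm
        have hgen : Monoid.CoprodI.of (i := s) (Multiplicative.ofAdd (1 : ZMod 2)) = gen k s := rfl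
        rw [hgen]
        by_cases hsi : s = i
        · subst hsi; right; intro m'; rw [hρi, hρi]; ring
        · by_cases hsj : s = j
          · subst hsj; right; intro m'; rw [hρj, hρj]; ring
          · left; intro m'; rw [hρs s hsi hsj]; simp
    | mul x y hx hy =>
      have hmul : ∀ m : ℤ, ρ (x * y) m = ρ x (ρ y m) := by
        intro m; rw [map_mul]; rfl
      rcases hx with hx | hx <;> rcases hy with hy | hy
      · left; intro m; rw [hmul m, hmul 0, hx (ρ y m), hx (ρ y 0), hy m]; ring
      · right; intro m; rw [hmul m, hmul 0, hx (ρ y m), hx (ρ y 0), hy m]; ring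
      · right; intro m; rw [hmul m, hmul 0, hx (ρ y m), hx (ρ y 0), hy m]; ring
      · left; intro m; rw [hmul m, hmul 0, hx (ρ y m), hx (ρ y 0), hy m]; ring
  have hci : ∀ x : G k, cosetIdx ρ (x * gen k i) = ρ x 1 := by
    intro x
    show ρ (x * gen k i) 0 = ρ x 1
    rw [map_mul]
    show ρ x (ρ (gen k i) 0) = ρ x 1
    rw [hρi]; norm_num
  have hcj : ∀ x : G k, cosetIdx ρ (x * gen k j) = ρ x (-1) := by
    intro x
    show ρ (x * gen k j) 0 = ρ x (-1)
    rw [map_mul]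
    show ρ x (ρ (gen k j) 0) = ρ x (-1)
    rw [hρj]; norm_num
  -- key local equation
  have hkey : ∀ x : G k,
      phiP p ((g (cosetIdx ρ x + 1) - g (cosetIdx ρ x)) / ϱ (cosetIdx ρ x)) +
      phiP p ((g (cosetIdx ρ x - 1) - g (cosetIdx ρ x)) / ϱ (cosetIdx ρ x - 1)) = 0 := by
    intro x
    set n := cosetIdx ρ x with hn
    have h := hharm x
    unfold pLap at h
    set f : Fin (k + 1) → ℝ :=
      fun s => phiP p ((g (cosetIdx ρ (x * gen k s)) - g (cosetIdx ρ x)) / r (x, x * gen k s))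
      with hf
    have hz : ∀ s, s ≠ i → s ≠ j → f s = 0 := by
      intro s hsi hsj
      have : cosetIdx ρ (x * gen k s) = n := by
        show ρ (x * gen k s) 0 = n
        rw [map_mul]
        show ρ x (ρ (gen k s) 0) = n
        rw [hρs s hsi hsj]; rfl
      simp only [hf, this, hn, sub_self, zero_div, phiP_zero]
    have hsum : ∑ s : Fin (k + 1), f s = f i + f j := by
      rw [← Finset.sum_pair hij]
      apply (Finset.sum_subset (Finset.subset_univ _) ?_).symm
      intro s _ hs
      simp only [Finset.mem_insert, Finset.mem_singleton, not_or] at hs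
      exact hz s hs.1 hs.2
    have hfi_j : f i + f j = 0 := by rw [← hsum]; exact h
    -- resistances along the two relevant edges
    rcases Aff x with hA | hA
    · have h1 : cosetIdx ρ (x * gen k i) = n + 1 := by rw [hci, hA]; rfl
      have h2 : cosetIdx ρ (x * gen k j) = n - 1 := by rw [hcj, hA]; rfl
      have hr1 : r (x, x * gen k i) = ϱ n := by
        apply hrϱ; rw [h1, hn]
      have hr2 : r (x, x * gen k j) = ϱ (n - 1) := by
        rw [hr_symm]
        have := hrϱ (x * gen k j) x (by rw [h2]; ring)
        rw [h2] at this; exact this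
      rw [hf] at hfi_j
      simp only [h1, h2, hr1, hr2] at hfi_j
      exact hfi_j
    · have h1 : cosetIdx ρ (x * gen k i) = n - 1 := by rw [hci, hA]; rfl
      have h2 : cosetIdx ρ (x * gen k j) = n + 1 := by
        rw [hcj, hA]; show ρ x 0 - -1 = ρ x 0 + 1; ring
      have hr1 : r (x, x * gen k j) = ϱ n := by
        apply hrϱ; rw [h2, hn]
      have hr2 : r (x, x * gen k i) = ϱ (n - 1) := by
        rw [hr_symm]
        have := hrϱ (x * gen k i) x (by rw [h1]; ring)
        rw [h1] at this; exact this
      rw [hf] at hfi_j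
      simp only [h1, h2, hr1, hr2] at hfi_j
      linarith [hfi_j]
  -- every integer is a coset index
  have hex : ∀ n : ℤ, ∃ x : G k, cosetIdx ρ x = n := by
    have hstep : ∀ x : G k, (∃ y : G k, cosetIdx ρ y = cosetIdx ρ x + 1) ∧
        (∃ y : G k, cosetIdx ρ y = cosetIdx ρ x - 1) := by
      intro x
      rcases Aff x with hA | hA
      · constructor
        · exact ⟨x * gen k i, by rw [hci, hA]; rfl⟩
        · exact ⟨x * gen k j, by rw [hcj, hA]; rfl⟩
      · constructor
        · exact ⟨x * gen k j, by rw [hcj, hA]; show ρ x 0 - -1 = ρ x 0 + 1; ring⟩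
        · exact ⟨x * gen k i, by rw [hci, hA]; rfl⟩
    intro n
    induction n using Int.induction_on with
    | zero => exact ⟨1, by show ρ 1 0 = 0; simp⟩
    | succ n ih =>
      obtain ⟨x, hx⟩ := ih
      obtain ⟨y, hy⟩ := (hstep x).1
      exact ⟨y, by rw [hy, hx]⟩
    | pred n ih =>
      obtain ⟨x, hx⟩ := ih
      obtain ⟨y, hy⟩ := (hstep x).2
      exact ⟨y, by rw [hy, hx]⟩
  -- the flux is constant
  have hrec : ∀ n : ℤ, phiP p ((g (n + 1) - g n) / ϱ n)
      = phiP p ((g n - g (n - 1)) / ϱ (n - 1)) := by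
    intro n
    obtain ⟨x, hx⟩ := hex n
    have := hkey x
    rw [hx] at this
    have hodd : phiP p ((g (n - 1) - g n) / ϱ (n - 1))
        = -phiP p ((g n - g (n - 1)) / ϱ (n - 1)) := by
      rw [← phiP_neg]; ring_nf
    rw [hodd] at this
    linarith
  have hconst : ∀ n : ℤ, phiP p ((g (n + 1) - g n) / ϱ n)
      = phiP p ((g (0 + 1) - g 0) / ϱ 0) := by
    intro n
    induction n using Int.induction_on with
    | zero => rfl
    | succ n ih =>
      rw [hrec (n + 1)]
      simpa using ih
    | pred n ih =>
      have h2 := hrec (-(n : ℤ))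
      rw [ih] at h2
      simp only [show -(n : ℤ) - 1 + 1 = -(n : ℤ) from by ring]
      exact h2.symm
  refine ⟨phiP p ((g (0 + 1) - g 0) / ϱ 0), fun n => ?_⟩
  have h := hconst n
  have hϱ := hϱ_pos n
  set t := g (n + 1) - g n with ht
  have habs : |t / ϱ n| = |t| / ϱ n := by
    rw [abs_div, abs_of_pos hϱ]
  have hpow : (|t| / ϱ n) ^ (p - 2) = |t| ^ (p - 2) / ϱ n ^ (p - 2) :=
    Real.div_rpow (abs_nonneg t) hϱ.le (p - 2)
  have hps : ϱ n ^ (p - 1) = ϱ n ^ (p - 2) * ϱ n := by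
    rw [show p - 1 = (p - 2) + 1 by ring, Real.rpow_add_one hϱ.ne']
  rw [← h]
  unfold phiP
  rw [habs, hpow, hps]
  have hne : ϱ n ≠ 0 := hϱ.ne'
  have hne2 : ϱ n ^ (p - 2) ≠ 0 := (Real.rpow_pos_of_pos hϱ _).ne'
  field_simp
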